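/- The quaternion Gaussian f(x) = q e^{-α|x|²} with αβ = π² satisfies both Miyachi conditions: e^{α|x|²} f ∈ L^∞(ℝ²,ℍ), and ∫_{ℝ²} log⁺(|ℱ{f}(y)| e^{β|y|²} / ρ) dy < ∞ whenever ρ > |q| π/α. -/

import Mathlib

open MeasureTheory Real

noncomputable section

def QI : Quaternion ℝ := ⟨0,1,0,0⟩
def QJ : Quaternion ℝ := ⟨0,0,1,0⟩
def QK : Quaternion ℝ := ⟨0,0,0,1⟩

/-- `e^{uθ} = cos θ + u sin θ` for a quaternion imaginary unit `u`. -/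
def qexp (u : Quaternion ℝ) (θ : ℝ) : Quaternion ℝ :=
  (Real.cos θ) • (1 : Quaternion ℝ) + (Real.sin θ) • u

/-- Two-sided quaternion Fourier transform. -/
def QFT (f : ℝ × ℝ → Quaternion ℝ) (ξ : ℝ × ℝ) : Quaternion ℝ :=
  ∫ x : ℝ × ℝ, qexp QI (-(2 * π * ξ.1 * x.1)) * f x * qexp QJ (-(2 * π * ξ.2 * x.2))

/-- `log⁺ x = max (log x) 0`. -/
def posLog (x : ℝ) : ℝ := max (Real.log x) 0

lemma gauss_cos_sin (a c : ℝ) (ha : 0 < a) :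
    (∫ t : ℝ, Real.exp (-a * t ^ 2) * Real.cos (c * t)) =
      Real.sqrt (π / a) * Real.exp (-c ^ 2 / (4 * a)) ∧
    (∫ t : ℝ, Real.exp (-a * t ^ 2) * Real.sin (c * t)) = 0 := by
  have ha' : (0:ℝ) < ((a:ℂ)).re := by simpa using ha
  have hF := fourierIntegral_gaussian (b := (a:ℂ)) ha' (c : ℂ)
  set F : ℝ → ℂ := fun t => Complex.exp (Complex.I * c * t) * Complex.exp (-(a:ℂ) * t ^ 2) with hFdef
  have hFint : Integrable F := by
    have h := integrable_cexp_quadratic (b := (a:ℂ)) ha' (Complex.I * c) 0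
    refine h.congr (Filter.Eventually.of_forall fun t => ?_)
    show Complex.exp _ = Complex.exp _ * Complex.exp _
    rw [← Complex.exp_add]; ring_nf
  have hFeq : ∀ t : ℝ, F t = ((Real.exp (-a * t ^ 2) * Real.cos (c * t) : ℝ) : ℂ) +
      ((Real.exp (-a * t ^ 2) * Real.sin (c * t) : ℝ) : ℂ) * Complex.I := by
    intro t
    show Complex.exp _ * Complex.exp _ = _
    have h1 : Complex.I * c * t = ((c * t : ℝ) : ℂ) * Complex.I := by push_cast; ring
    have h2 : -(a:ℂ) * t ^ 2 = ((-a * t ^ 2 : ℝ) : ℂ) := by push_cast; ring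
    rw [h1, h2, Complex.exp_mul_I, ← Complex.ofReal_exp, ← Complex.ofReal_cos,
      ← Complex.ofReal_sin]
    push_cast
    ring
  have hRHS : ((π:ℂ) / a) ^ (1 / 2 : ℂ) * Complex.exp (-(c:ℂ) ^ 2 / (4 * a)) =
      ((Real.sqrt (π / a) * Real.exp (-c ^ 2 / (4 * a)) : ℝ) : ℂ) := by
    have h1 : ((π:ℂ) / a) = ((π / a : ℝ) : ℂ) := by push_cast; ring
    have h2 : ((π / a : ℝ) : ℂ) ^ (1 / 2 : ℂ) = ((Real.sqrt (π / a) : ℝ) : ℂ) := by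
      rw [show (1 / 2 : ℂ) = ((1 / 2 : ℝ) : ℂ) by norm_num,
        ← Complex.ofReal_cpow (by positivity), ← Real.sqrt_eq_rpow]
    have h3 : -(c:ℂ) ^ 2 / (4 * a) = ((-c ^ 2 / (4 * a) : ℝ) : ℂ) := by push_cast; ring
    rw [h1, h2, h3, ← Complex.ofReal_exp, ← Complex.ofReal_mul]
  have hI : (∫ t : ℝ, F t) = ((Real.sqrt (π / a) * Real.exp (-c ^ 2 / (4 * a)) : ℝ) : ℂ) := by
    rw [show (∫ t : ℝ, F t) = (↑π / ↑a) ^ (1 / 2 : ℂ) * Complex.exp (-(c:ℂ) ^ 2 / (4 * (a:ℂ))) from hF, hRHS]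
  constructor
  · have h := _root_.integral_re hFint
    rw [hI] at h
    simp only [RCLike.re_to_complex, Complex.ofReal_re] at h
    rw [← h]
    refine integral_congr_ae (Filter.Eventually.of_forall fun t => ?_)
    simp only [hFeq t, Complex.add_re, Complex.add_im, Complex.ofReal_re, Complex.ofReal_im,
      Complex.mul_re, Complex.mul_im, Complex.I_re, Complex.I_im, mul_zero, mul_one, zero_mul,
      sub_zero, add_zero, zero_add, zero_sub, neg_zero]
  · have h := _root_.integral_im hFint
    rw [hI] at h
    simp only [RCLike.im_to_complex, Complex.ofReal_im] at h
    rw [← h]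
    refine integral_congr_ae (Filter.Eventually.of_forall fun t => ?_)
    simp only [hFeq t, Complex.add_re, Complex.add_im, Complex.ofReal_re, Complex.ofReal_im,
      Complex.mul_re, Complex.mul_im, Complex.I_re, Complex.I_im, mul_zero, mul_one, zero_mul,
      sub_zero, add_zero, zero_add, zero_sub, neg_zero]

lemma gauss_smul (a c : ℝ) (ha : 0 < a) (u : Quaternion ℝ) :
    ∫ t : ℝ, Real.exp (-a * t ^ 2) • qexp u (-(c * t)) =
      (Real.sqrt (π / a) * Real.exp (-c ^ 2 / (4 * a))) • (1 : Quaternion ℝ) := by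
  have hint : ∀ φ : ℝ → ℝ, Continuous φ → (∀ t, |φ t| ≤ 1) →
      Integrable (fun t => Real.exp (-a * t ^ 2) * φ t) := by
    intro φ hc hφ
    refine (integrable_exp_neg_mul_sq ha).mono'
      ((Real.continuous_exp.comp (by continuity)).mul hc).aestronglyMeasurable
      (Filter.Eventually.of_forall fun t => ?_)
    rw [Real.norm_eq_abs, abs_mul, abs_of_pos (Real.exp_pos _)]
    calc Real.exp (-a * t ^ 2) * |φ t| ≤ Real.exp (-a * t ^ 2) * 1 := by
          exact mul_le_mul_of_nonneg_left (hφ t) (Real.exp_pos _).le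
      _ = _ := mul_one _
  have h1 : Integrable (fun t => Real.exp (-a * t ^ 2) * Real.cos (c * t)) :=
    hint _ (Real.continuous_cos.comp (by continuity)) fun t => Real.abs_cos_le_one _
  have h2 : Integrable (fun t => Real.exp (-a * t ^ 2) * Real.sin (c * t)) :=
    hint _ (Real.continuous_sin.comp (by continuity)) fun t => Real.abs_sin_le_one _
  have key : ∀ t : ℝ, Real.exp (-a * t ^ 2) • qexp u (-(c * t)) =
      (Real.exp (-a * t ^ 2) * Real.cos (c * t)) • (1 : Quaternion ℝ) +
      (-(Real.exp (-a * t ^ 2) * Real.sin (c * t))) • u := by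
    intro t
    simp [qexp, smul_add, smul_smul, Real.cos_neg, Real.sin_neg, mul_neg]
  have h2' : Integrable (fun t => -(Real.exp (-a * t ^ 2) * Real.sin (c * t))) := h2.neg
  rw [integral_congr_ae (Filter.Eventually.of_forall fun t => key t)]
  rw [integral_add (h1.smul_const _) (h2'.smul_const _), integral_smul_const,
    integral_smul_const, (gauss_cos_sin a c ha).1, integral_neg, (gauss_cos_sin a c ha).2]
  simp

lemma norm_qexp_QI (θ : ℝ) : ‖qexp QI θ‖ = 1 := by
  have h : Quaternion.normSq (qexp QI θ) = 1 := by
    simp [qexp, QI, Quaternion.normSq_def']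
    change (cos θ * 1 + sin θ * 0) ^ 2 + (cos θ * 0 + sin θ * 1) ^ 2 + (cos θ * 0 + sin θ * 0) ^ 2 + (cos θ * 0 + sin θ * 0) ^ 2 = 1
    nlinarith [cos_sq_add_sin_sq θ]
  have h2 := Quaternion.normSq_eq_norm_mul_self (a := qexp QI θ)
  rw [h] at h2
  nlinarith [norm_nonneg (qexp QI θ)]

lemma norm_qexp_QJ (θ : ℝ) : ‖qexp QJ θ‖ = 1 := by
  have h : Quaternion.normSq (qexp QJ θ) = 1 := by
    simp [qexp, QJ, Quaternion.normSq_def']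
    change (cos θ * 1 + sin θ * 0) ^ 2 + (cos θ * 0 + sin θ * 0) ^ 2 + (cos θ * 0 + sin θ * 1) ^ 2 + (cos θ * 0 + sin θ * 0) ^ 2 = 1
    nlinarith [cos_sq_add_sin_sq θ]
  have h2 := Quaternion.normSq_eq_norm_mul_self (a := qexp QJ θ)
  rw [h] at h2
  nlinarith [norm_nonneg (qexp QJ θ)]

lemma qexp_cont (u : Quaternion ℝ) (c : ℝ) : Continuous (fun t : ℝ => qexp u (-(c * t))) := by
  unfold qexp; continuity

set_option maxHeartbeats 1000000 in
theorem gaussian_satisfies_miyachi (q : Quaternion ℝ) (α β : ℝ) (hα : 0 < α) (hβ : 0 < β)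
    (hαβ : α * β = π ^ 2) (f : ℝ × ℝ → Quaternion ℝ)
    (hf : ∀ x : ℝ × ℝ, f x = Real.exp (-α * (x.1 ^ 2 + x.2 ^ 2)) • q) :
    MemLp (fun x : ℝ × ℝ => Real.exp (α * (x.1 ^ 2 + x.2 ^ 2)) • f x) ⊤ ∧
    ∀ ρ : ℝ, ‖q‖ * π / α < ρ → Integrable (fun y : ℝ × ℝ =>
      _root_.posLog (‖QFT f y‖ * Real.exp (β * (y.1 ^ 2 + y.2 ^ 2)) / ρ)) := by
  constructor
  · have h : (fun x : ℝ × ℝ => Real.exp (α * (x.1 ^ 2 + x.2 ^ 2)) • f x) = fun _ => q := by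
      funext x
      rw [hf x, smul_smul, ← Real.exp_add,
        show α * (x.1 ^ 2 + x.2 ^ 2) + -α * (x.1 ^ 2 + x.2 ^ 2) = 0 by ring,
        Real.exp_zero, one_smul]
    rw [h]
    exact memLp_top_const q
  · intro ρ hρ
    have hρ0 : 0 < ρ := lt_of_le_of_lt (by positivity) hρ
    -- the value of the QFT
    have hval : ∀ ξ : ℝ × ℝ, QFT f ξ = ((π / α) * Real.exp (-β * (ξ.1 ^ 2 + ξ.2 ^ 2))) • q := by
      intro ξ
      set c₁ : ℝ := 2 * π * ξ.1 with hc₁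
      set c₂ : ℝ := 2 * π * ξ.2 with hc₂
      set g₁ : ℝ → Quaternion ℝ := fun t => Real.exp (-α * t ^ 2) • qexp QI (-(c₁ * t)) with hg₁
      set g₂ : ℝ → Quaternion ℝ := fun t => Real.exp (-α * t ^ 2) • qexp QJ (-(c₂ * t)) with hg₂
      have hg₁c : Continuous g₁ :=
        (Real.continuous_exp.comp (by continuity)).smul (qexp_cont QI c₁)
      have hg₂c : Continuous g₂ :=
        (Real.continuous_exp.comp (by continuity)).smul (qexp_cont QJ c₂)
      have hn₁ : ∀ t, ‖g₁ t‖ = Real.exp (-α * t ^ 2) := by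
        intro t
        rw [hg₁]
        simp only [norm_smul, Real.norm_eq_abs, abs_of_pos (Real.exp_pos _), norm_qexp_QI, mul_one]
      have hn₂ : ∀ t, ‖g₂ t‖ = Real.exp (-α * t ^ 2) := by
        intro t
        rw [hg₂]
        simp only [norm_smul, Real.norm_eq_abs, abs_of_pos (Real.exp_pos _), norm_qexp_QJ, mul_one]
      have hg₁int : Integrable g₁ :=
        (integrable_exp_neg_mul_sq hα).mono' hg₁c.aestronglyMeasurable
          (Filter.Eventually.of_forall fun t => (hn₁ t).le)
      have hg₂int : Integrable g₂ :=
        (integrable_exp_neg_mul_sq hα).mono' hg₂c.aestronglyMeasurable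
          (Filter.Eventually.of_forall fun t => (hn₂ t).le)
      have hEq : ∀ x : ℝ × ℝ, qexp QI (-(2 * π * ξ.1 * x.1)) * f x *
          qexp QJ (-(2 * π * ξ.2 * x.2)) = g₁ x.1 * (q * g₂ x.2) := by
        intro x
        rw [hf x, show Real.exp (-α * (x.1 ^ 2 + x.2 ^ 2)) =
          Real.exp (-α * x.1 ^ 2) * Real.exp (-α * x.2 ^ 2) by rw [← Real.exp_add]; ring_nf]
        rw [hg₁, hg₂]
        simp only [smul_mul_assoc, mul_smul_comm, smul_smul, mul_assoc]
        ring_nf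
        rw [hc₁, hc₂]; ring_nf
      have hprod : Integrable (fun x : ℝ × ℝ => g₁ x.1 * (q * g₂ x.2)) := by
        have hb : Integrable (fun x : ℝ × ℝ =>
            Real.exp (-α * x.1 ^ 2) * (‖q‖ * Real.exp (-α * x.2 ^ 2))) := by
          rw [MeasureTheory.Measure.volume_eq_prod]
          exact (integrable_exp_neg_mul_sq hα).mul_prod
            ((integrable_exp_neg_mul_sq hα).const_mul _)
        refine hb.mono' ?_ (Filter.Eventually.of_forall fun x => ?_)
        · exact ((hg₁c.comp continuous_fst).mul
            (continuous_const.mul (hg₂c.comp continuous_snd))).aestronglyMeasurable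
        · rw [norm_mul, norm_mul, hn₁, hn₂]
      have key : QFT f ξ = (∫ t, g₁ t) * (q * ∫ t, g₂ t) := by
        rw [QFT, integral_congr_ae (Filter.Eventually.of_forall hEq)]
        rw [MeasureTheory.Measure.volume_eq_prod] at hprod ⊢
        rw [MeasureTheory.integral_prod _ hprod]
        have inner : ∀ x₁ : ℝ, (∫ x₂ : ℝ, g₁ x₁ * (q * g₂ x₂)) = g₁ x₁ * (q * ∫ t, g₂ t) := by
          intro x₁
          have := ((ContinuousLinearMap.mul ℝ (Quaternion ℝ)) (g₁ x₁ * q)).integral_comp_comm hg₂int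
          simp only [ContinuousLinearMap.mul_apply'] at this
          simp only [← mul_assoc] at this ⊢
          exact this
        rw [integral_congr_ae (Filter.Eventually.of_forall inner)]
        have := ((ContinuousLinearMap.mul ℝ (Quaternion ℝ)).flip (q * ∫ t, g₂ t)).integral_comp_comm hg₁int
        simp only [ContinuousLinearMap.flip_apply, ContinuousLinearMap.mul_apply'] at this
        exact this
      rw [key, gauss_smul α c₁ hα QI, gauss_smul α c₂ hα QJ]
      have hs : ∀ d : ℝ, -(2 * π * d) ^ 2 / (4 * α) = -β * d ^ 2 := by
        intro d
        have hα' : α ≠ 0 := ne_of_gt hα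
        field_simp
        nlinarith [hαβ]
      rw [show -c₁ ^ 2 / (4 * α) = -β * ξ.1 ^ 2 from hs ξ.1,
        show -c₂ ^ 2 / (4 * α) = -β * ξ.2 ^ 2 from hs ξ.2]
      have hsqrt : Real.sqrt (π / α) * Real.sqrt (π / α) = π / α :=
        Real.mul_self_sqrt (by positivity)
      have hee : Real.exp (-β * ξ.2 ^ 2) * Real.exp (-β * ξ.1 ^ 2) =
          Real.exp (-β * (ξ.1 ^ 2 + ξ.2 ^ 2)) := by
        rw [← Real.exp_add]; congr 1; ring
      simp only [smul_mul_assoc, mul_smul_comm, smul_smul, one_mul, mul_one]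
      congr 1
      linear_combination (Real.exp (-β * ξ.2 ^ 2) * Real.exp (-β * ξ.1 ^ 2)) * hsqrt +
        (π / α) * hee
    -- the integrand is identically zero
    have hzero : (fun y : ℝ × ℝ =>
        _root_.posLog (‖QFT f y‖ * Real.exp (β * (y.1 ^ 2 + y.2 ^ 2)) / ρ)) = fun _ => 0 := by
      funext y
      have hnorm : ‖QFT f y‖ * Real.exp (β * (y.1 ^ 2 + y.2 ^ 2)) = ‖q‖ * π / α := by
        rw [hval y, norm_smul, Real.norm_eq_abs,
          abs_of_pos (by positivity : (0:ℝ) < π / α * Real.exp (-β * (y.1 ^ 2 + y.2 ^ 2)))]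
        rw [mul_comm (π / α * Real.exp (-β * (y.1 ^ 2 + y.2 ^ 2))) ‖q‖]
        rw [mul_assoc, mul_assoc, ← Real.exp_add,
          show -β * (y.1 ^ 2 + y.2 ^ 2) + β * (y.1 ^ 2 + y.2 ^ 2) = 0 by ring,
          Real.exp_zero, mul_one, mul_div_assoc]
      rw [hnorm]
      simp only [_root_.posLog]
      rw [max_eq_right]
      exact Real.log_nonpos (by positivity) ((div_le_one hρ0).mpr hρ.le)
    rw [hzero]
    exact integrable_zero _ _ _
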